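/- Let A be an m×n real matrix with nonnegative entries and b ∈ ℝ^m nonnegative, with LIN > 0 the attained optimal value of min{‖x‖₁ : Ax ≥ b, x ≥ 0}. Let δ > 0, α > 0, and let x' be feasible with ‖x'‖₁ = (1+δ')·LIN for some δ' ≥ δ and ‖x'‖₁ ≥ 2α·(1/δ + 1). Set θ = 2α·(1/δ + 1)/‖x'‖₁, x^var = θ·x', x^fix = x' − x^var, and b^var = b − A·x^fix. Let x̂ satisfy A x̂ ≥ b^var, x̂ ≥ 0, and ‖x̂‖₁ ≤ (1 + δ/2)·min{‖x‖₁ : Ax ≥ b^var, x ≥ 0}. Define x'' = x^fix + x̂ if ‖x^fix + x̂‖₁ < ‖x'‖₁, and x'' = x' otherwise. Then x'' is feasible, ‖x''‖₁ ≤ ‖x'‖₁ − α = (1+δ')·LIN − α, and ‖x'' − x'‖₁ ≤ 4α·(1/δ + 1). -/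

import Mathlib

open Finset

theorem algorithm2_decrease
    (m n : ℕ) (hm : 0 < m) (hn : 0 < n)
    (A : Matrix (Fin m) (Fin n) ℝ) (hA : ∀ i j, 0 ≤ A i j)
    (b : Fin m → ℝ) (hb : ∀ i, 0 ≤ b i)
    (xOPT : Fin n → ℝ)
    (hxOPTnonneg : ∀ j, 0 ≤ xOPT j)
    (hxOPTfeas : ∀ i, b i ≤ A.mulVec xOPT i)
    (hxOPTopt : ∀ x : Fin n → ℝ, (∀ j, 0 ≤ x j) → (∀ i, b i ≤ A.mulVec x i) →
      ∑ j, |xOPT j| ≤ ∑ j, |x j|)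
    (LIN : ℝ) (hLIN : LIN = ∑ j, |xOPT j|) (hLINpos : 0 < LIN)
    (δ : ℝ) (hδ : 0 < δ) (α : ℝ) (hα : 0 < α)
    (x' : Fin n → ℝ)
    (hx'nonneg : ∀ j, 0 ≤ x' j)
    (hx'feas : ∀ i, b i ≤ A.mulVec x' i)
    (δ' : ℝ) (hδ' : δ ≤ δ')
    (hx'val : ∑ j, |x' j| = (1 + δ') * LIN)
    (hx'big : 2 * α * (1 / δ + 1) ≤ ∑ j, |x' j|)
    (θ : ℝ) (hθ : θ = 2 * α * (1 / δ + 1) / ∑ j, |x' j|)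
    (xvar xfix : Fin n → ℝ)
    (hxvar : xvar = fun j => θ * x' j)
    (hxfix : xfix = fun j => x' j - xvar j)
    (bvar : Fin m → ℝ) (hbvar : bvar = fun i => b i - A.mulVec xfix i)
    -- zres : an optimal solution of the residual LP (attained optimum)
    (zres : Fin n → ℝ)
    (hzresnonneg : ∀ j, 0 ≤ zres j)
    (hzresfeas : ∀ i, bvar i ≤ A.mulVec zres i)
    (hzresopt : ∀ x : Fin n → ℝ, (∀ j, 0 ≤ x j) → (∀ i, bvar i ≤ A.mulVec x i) →
      ∑ j, |zres j| ≤ ∑ j, |x j|)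
    -- x̂ : an approximate solution of the residual LP with ratio (1 + δ/2)
    (xhat : Fin n → ℝ)
    (hxhatnonneg : ∀ j, 0 ≤ xhat j)
    (hxhatfeas : ∀ i, bvar i ≤ A.mulVec xhat i)
    (hxhatapx : ∑ j, |xhat j| ≤ (1 + δ / 2) * ∑ j, |zres j|)
    (x'' : Fin n → ℝ)
    (hx'' : x'' = if (∑ j, |xfix j + xhat j|) < ∑ j, |x' j|
      then fun j => xfix j + xhat j else x') :
    (∀ j, 0 ≤ x'' j) ∧ (∀ i, b i ≤ A.mulVec x'' i) ∧
    ∑ j, |x'' j| ≤ (∑ j, |x' j|) - α ∧ (∑ j, |x' j|) - α = (1 + δ') * LIN - α ∧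
    ∑ j, |x'' j - x' j| ≤ 4 * α * (1 / δ + 1) := by

  have hδ'pos : 0 < δ' := lt_of_lt_of_le hδ hδ'
  have h1δ' : (0:ℝ) < 1 + δ' := by linarith
  set S := ∑ j, |x' j| with hSdef
  clear_value S
  have hSpos : 0 < S := by rw [hx'val]; exact mul_pos h1δ' hLINpos
  have hKpos : 0 < 2 * α * (1 / δ + 1) := by positivity
  have hθpos : 0 < θ := by rw [hθ]; positivity
  have hθle1 : θ ≤ 1 := by rw [hθ, div_le_one hSpos]; exact hx'big
  have hθS : θ * S = 2 * α * (1 / δ + 1) := by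
    rw [hθ]; field_simp
  have hxfixnonneg : ∀ j, 0 ≤ xfix j := by
    intro j
    rw [hxfix]
    simp only [hxvar]
    nlinarith [mul_nonneg (sub_nonneg.mpr hθle1) (hx'nonneg j), hx'nonneg j]
  have hmul : ∀ (v : Fin n → ℝ) (i : Fin m), A.mulVec v i = ∑ j, A i j * v j := by
    intro v i; rfl
  have hmulxfix : ∀ i, A.mulVec xfix i = A.mulVec x' i - θ * A.mulVec x' i := by
    intro i
    rw [hmul, hmul, Finset.mul_sum, ← Finset.sum_sub_distrib]
    refine Finset.sum_congr rfl fun j _ => ?_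
    rw [hxfix]; simp only [hxvar]; ring
  -- residual feasibility of θ • xOPT
  have hθOPTfeas : ∀ i, bvar i ≤ A.mulVec (fun j => θ * xOPT j) i := by
    intro i
    have h1 : A.mulVec (fun j => θ * xOPT j) i = θ * A.mulVec xOPT i := by
      rw [hmul, hmul, Finset.mul_sum]
      exact Finset.sum_congr rfl fun j _ => by ring
    rw [h1, hbvar]
    show b i - A.mulVec xfix i ≤ θ * A.mulVec xOPT i
    have h2 := hmulxfix i
    have h3 := hx'feas i
    have h4 := hxOPTfeas i
    have h5 := hb i
    nlinarith [mul_le_mul_of_nonneg_left h4 hθpos.le,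
      mul_le_mul_of_nonneg_left h3 (sub_nonneg.mpr hθle1)]
  have hzresbound : ∑ j, |zres j| ≤ θ * LIN := by
    have h6 := hzresopt (fun j => θ * xOPT j)
      (fun j => mul_nonneg hθpos.le (hxOPTnonneg j)) hθOPTfeas
    calc ∑ j, |zres j| ≤ ∑ j, |θ * xOPT j| := h6
      _ = θ * LIN := by
          rw [hLIN, Finset.mul_sum]
          exact Finset.sum_congr rfl fun j _ => by rw [abs_mul, abs_of_nonneg hθpos.le]
  have hθLINnonneg : 0 ≤ θ * LIN := mul_nonneg hθpos.le hLINpos.le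
  have hxhatsum : ∑ j, |xhat j| ≤ (1 + δ / 2) * (θ * LIN) := by
    calc ∑ j, |xhat j| ≤ (1 + δ / 2) * ∑ j, |zres j| := hxhatapx
      _ ≤ (1 + δ / 2) * (θ * LIN) :=
          mul_le_mul_of_nonneg_left hzresbound (by linarith)
  have hSx : S = ∑ j, x' j := by
    rw [hSdef]; exact Finset.sum_congr rfl fun j _ => abs_of_nonneg (hx'nonneg j)
  have hsumxfix : ∑ j, |xfix j| = (1 - θ) * S := by
    calc ∑ j, |xfix j| = ∑ j, xfix j :=
          Finset.sum_congr rfl fun j _ => abs_of_nonneg (hxfixnonneg j)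
      _ = (1 - θ) * ∑ j, x' j := by
          rw [Finset.mul_sum]
          refine Finset.sum_congr rfl fun j _ => ?_
          rw [hxfix]; simp only [hxvar]; ring
      _ = (1 - θ) * S := by rw [hSx]
  -- key numeric inequality
  have ht : θ * LIN * (1 + δ') = 2 * α * (1 / δ + 1) := by
    rw [← hθS, hx'val]; ring
  have hu : δ * (1 / δ) = 1 := by field_simp
  have h7 : (1 + δ / 2) * (2 * α * (1 / δ + 1)) ≤ (2 * α * (1 / δ + 1) - α) * (1 + δ') := by
    nlinarith [mul_le_mul_of_nonneg_left hδ' (mul_pos hα (one_div_pos.mpr hδ)).le, hu,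
      mul_pos hα hδ, hα.le, hδ.le]
  have h9 : (1 + δ / 2) * (θ * LIN) ≤ 2 * α * (1 / δ + 1) - α := by
    rw [← mul_le_mul_iff_left₀ h1δ']
    calc (1 + δ / 2) * (θ * LIN) * (1 + δ')
        = (1 + δ / 2) * (θ * LIN * (1 + δ')) := by ring
      _ = (1 + δ / 2) * (2 * α * (1 / δ + 1)) := by rw [ht]
      _ ≤ (2 * α * (1 / δ + 1) - α) * (1 + δ') := h7
  have key : (1 - θ) * S + (1 + δ / 2) * (θ * LIN) ≤ S - α := by
    have hexp : (1 - θ) * S = S - θ * S := by ring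
    linarith [hθS]
  have hcand : ∑ j, |xfix j + xhat j| ≤ S - α := by
    calc ∑ j, |xfix j + xhat j| = ∑ j, (|xfix j| + |xhat j|) := by
          refine Finset.sum_congr rfl fun j _ => ?_
          rw [abs_of_nonneg (add_nonneg (hxfixnonneg j) (hxhatnonneg j)),
            abs_of_nonneg (hxfixnonneg j), abs_of_nonneg (hxhatnonneg j)]
      _ = (1 - θ) * S + ∑ j, |xhat j| := by rw [Finset.sum_add_distrib, hsumxfix]
      _ ≤ (1 - θ) * S + (1 + δ / 2) * (θ * LIN) := by linarith
      _ ≤ S - α := key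
  have hcond : ∑ j, |xfix j + xhat j| < S := lt_of_le_of_lt hcand (by linarith)
  have hx''eq : x'' = fun j => xfix j + xhat j := by rw [hx'', if_pos hcond]
  refine ⟨?_, ?_, ?_, ?_, ?_⟩
  · intro j
    rw [hx''eq]
    exact add_nonneg (hxfixnonneg j) (hxhatnonneg j)
  · intro i
    have h10 : A.mulVec x'' i = A.mulVec xfix i + A.mulVec xhat i := by
      rw [hx''eq, hmul, hmul, hmul, ← Finset.sum_add_distrib]
      exact Finset.sum_congr rfl fun j _ => by ring
    have h11 := hxhatfeas i
    rw [hbvar] at h11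
    simp only at h11
    rw [h10]
    linarith
  · simp only [hx''eq]
    exact hcand
  · rw [hx'val]
  · have hsumxvar : ∑ j, |xvar j| = θ * S := by
      rw [hSx, Finset.mul_sum]
      exact Finset.sum_congr rfl fun j _ => by
        rw [hxvar]
        rw [abs_mul, abs_of_nonneg hθpos.le, abs_of_nonneg (hx'nonneg j)]
    have hdiff : ∑ j, |x'' j - x' j| ≤ ∑ j, |xhat j| + ∑ j, |xvar j| := by
      rw [← Finset.sum_add_distrib]
      refine Finset.sum_le_sum fun j _ => ?_
      have he : x'' j - x' j = xhat j - xvar j := by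
        simp only [hx''eq, hxfix]; ring
      rw [he]
      exact abs_sub _ _
    have hbd : (1 + δ / 2) * (θ * LIN) ≤ θ * S := by
      calc (1 + δ / 2) * (θ * LIN) = (θ * LIN) * (1 + δ / 2) := by ring
        _ ≤ (θ * LIN) * (1 + δ') := mul_le_mul_of_nonneg_left (by linarith) hθLINnonneg
        _ = θ * ((1 + δ') * LIN) := by ring
        _ = θ * S := by rw [hx'val]
    calc ∑ j, |x'' j - x' j| ≤ ∑ j, |xhat j| + ∑ j, |xvar j| := hdiff
      _ ≤ (1 + δ / 2) * (θ * LIN) + θ * S := by linarith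
      _ ≤ θ * S + θ * S := by linarith
      _ = 4 * α * (1 / δ + 1) := by rw [hθS]; ring
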